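/- Let G = (V,E) be a locally finite graph and q : V → ℝ such that (G,q) is (a,k)-sparse for some a, k ≥ 0. Then q belongs to K_{0⁺} if and only if for every α ∈ (0,1) there is κ_α ≥ 0 such that q₋(x) ≤ α(deg(x) + q₊(x)) + κ_α for all x ∈ V. -/

import Mathlib

open scoped BigOperators

noncomputable section

variable {V : Type*} [DecidableEq V] (G : SimpleGraph V) [DecidableRel G.Adj]

/-- The squared `ℓ²`-norm `‖f‖² = ∑_x |f x|²` of a (finitely supported) function. -/
def qNormSq (f : V → ℂ) : ℝ := ∑' x, ‖f x‖ ^ 2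

/-- The quadratic form of the Laplacian:
`Q_Δ(f) = (1/2) ∑_{x ~ y} |f x - f y|²` (sum over ordered pairs of adjacent vertices). -/
def qLap (f : V → ℂ) : ℝ :=
  (1 / 2) * ∑' (x : V), ∑' (y : V), if G.Adj x y then ‖f x - f y‖ ^ 2 else 0

/-- The magnetic quadratic form
`Q_θ(f) = (1/2) ∑_{x ~ y} |f x - e^{iθ(x,y)} f y|²`. -/
def qMag (θ : V → V → ℝ) (f : V → ℂ) : ℝ :=
  (1 / 2) * ∑' (x : V), ∑' (y : V),
    if G.Adj x y then ‖f x - Complex.exp (Complex.I * (θ x y)) * f y‖ ^ 2 else 0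

/-- The quadratic form of a potential: `Q_q(f) = ∑_x q x * |f x|²`. -/
def qPot (q : V → ℝ) (f : V → ℂ) : ℝ := ∑' x, q x * ‖f x‖ ^ 2

variable [G.LocallyFinite]

/-- The quadratic form of the degree: `Q_deg(f) = ∑_x deg x * |f x|²`. -/
def qDeg (f : V → ℂ) : ℝ := ∑' x, (G.degree x : ℝ) * ‖f x‖ ^ 2

/-- Twice the number of undirected edges of the subgraph induced on `W`,
i.e. the number of ordered pairs of adjacent vertices in `W × W`. -/
def edgesTwice (W : Finset V) : ℕ := ((W ×ˢ W).filter fun p => G.Adj p.1 p.2).card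

/-- The cardinality `|∂W|` of the edge boundary of `W`. -/
def bdryCard (W : Finset V) : ℕ :=
  ∑ x ∈ W, ((G.neighborFinset x).filter fun y => y ∉ W).card

/-- `(G, q)` is `(a,k)`-sparse: `2|E_W| ≤ k|W| + a(|∂W| + q₊(W))` for all finite `W`. -/
def IsSparse (q : V → ℝ) (a k : ℝ) : Prop :=
  ∀ W : Finset V,
    (edgesTwice G W : ℝ) ≤ k * W.card + a * ((bdryCard G W : ℝ) + ∑ x ∈ W, max (q x) 0)

/-- The potential `q` belongs to the class `K_α`:
`Q_{q₋}(f) ≤ α (Q_Δ(f) + Q_{q₊}(f)) + C ‖f‖²` for all finitely supported `f`. -/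
def KClass (q : V → ℝ) (α : ℝ) : Prop :=
  ∃ C : ℝ, 0 ≤ C ∧ ∀ f : V → ℂ, (Function.support f).Finite →
    qPot (fun x => max (-q x) 0) f ≤
      α * (qLap G f + qPot (fun x => max (q x) 0) f) + C * qNormSq f

/-- The potential `q` belongs to the magnetic class `K_α^θ`:
`Q_{q₋}(f) ≤ α (Q_θ(f) + Q_{q₊}(f)) + C ‖f‖²` for all finitely supported `f`. -/
def KClassTheta (θ : V → V → ℝ) (q : V → ℝ) (α : ℝ) : Prop :=
  ∃ C : ℝ, 0 ≤ C ∧ ∀ f : V → ℂ, (Function.support f).Finite →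
    qPot (fun x => max (-q x) 0) f ≤
      α * (qMag G θ f + qPot (fun x => max (q x) 0) f) + C * qNormSq f

/-- The Cheeger (isoperimetric) constant of `U ⊆ V`:
the infimum over nonempty finite `W ⊆ U` of `(|∂W| + q(W)) / (deg(W) + q(W))`,
with the convention that the quotient is `0` when the denominator vanishes. -/
def cheeger (q : V → ℝ) (U : Set V) : ℝ :=
  ⨅ W : {W : Finset V // ↑W ⊆ U ∧ W.Nonempty},
    if (∑ x ∈ W.1, ((G.degree x : ℝ) + q x)) = 0 then 0
    else ((bdryCard G W.1 : ℝ) + ∑ x ∈ W.1, q x) / ∑ x ∈ W.1, ((G.degree x : ℝ) + q x)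

/-- The Cheeger constant at infinity: `α_∞ = sup over finite K of α_{V∖K}`. -/
def cheegerInfty (q : V → ℝ) : ℝ :=
  ⨆ K : Finset V, cheeger G q ((↑K : Set V)ᶜ)


section Stmt8Aux

open Finset SimpleGraph

lemma handshake_nat (W : Finset V) :
    ∑ x ∈ W, G.degree x = edgesTwice G W + bdryCard G W := by
  classical
  unfold edgesTwice bdryCard
  rw [Finset.card_filter, Finset.sum_product, ← Finset.sum_add_distrib]
  refine Finset.sum_congr rfl fun x _ => ?_
  show G.degree x = (∑ y ∈ W, if G.Adj x y then 1 else 0)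
      + ((G.neighborFinset x).filter fun y => y ∉ W).card
  have h1 : (W.filter fun y => G.Adj x y) = (G.neighborFinset x).filter fun y => y ∈ W := by
    ext y; simp [SimpleGraph.mem_neighborFinset, and_comm]
  have h2 := Finset.card_filter_add_card_filter_not
      (s := G.neighborFinset x) (p := fun y => y ∈ W)
  have h3 : (G.neighborFinset x).card = G.degree x := G.card_neighborFinset_eq_degree x
  have h4 : (∑ y ∈ W, if G.Adj x y then 1 else 0)
      = ((G.neighborFinset x).filter fun y => y ∈ W).card := by
    rw [← Finset.card_filter, h1]
  omega

lemma handshake_real (W : Finset V) :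
    ∑ x ∈ W, (G.degree x : ℝ) = (edgesTwice G W : ℝ) + (bdryCard G W : ℝ) := by
  have h := handshake_nat G W
  have h2 : ((∑ x ∈ W, G.degree x : ℕ) : ℝ) = ((edgesTwice G W + bdryCard G W : ℕ) : ℝ) := by
    exact_mod_cast congrArg (Nat.cast : ℕ → ℝ) h
  push_cast at h2
  exact h2

/-- The key coarea/sparseness estimate, by induction on the size of the support. -/
lemma lemA (q : V → ℝ) (a k : ℝ) (hsparse : IsSparse G q a k) :
    ∀ (n : ℕ) (S : Finset V) (g : V → ℝ), (S.filter fun x => g x ≠ 0).card ≤ n →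
      (∀ x, 0 ≤ g x) → (∀ x ∉ S, g x = 0) →
      ∑ x ∈ S, (G.degree x : ℝ) * g x ≤
        k * ∑ x ∈ S, g x
        + (a+1) * ∑ x ∈ S, ∑ y ∈ G.neighborFinset x, max (g x - g y) 0
        + a * ∑ x ∈ S, max (q x) 0 * g x := by
  classical
  intro n
  induction n with
  | zero =>
    intro S g hcard hg hgS
    have hW : (S.filter fun x => g x ≠ 0) = ∅ := Finset.card_eq_zero.mp (Nat.le_zero.mp hcard)
    have hg0 : ∀ x, g x = 0 := by
      intro x
      by_cases hx : x ∈ S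
      · by_contra h
        have : x ∈ S.filter fun x => g x ≠ 0 := Finset.mem_filter.mpr ⟨hx, h⟩
        simp [hW] at this
      · exact hgS x hx
    simp [hg0]
  | succ n IH =>
    intro S g hcard hg hgS
    set W := S.filter fun x => g x ≠ 0 with hWdef
    by_cases hWe : W.Nonempty
    swap
    · have hg0 : ∀ x, g x = 0 := by
        intro x
        by_cases hx : x ∈ S
        · by_contra h
          exact hWe ⟨x, Finset.mem_filter.mpr ⟨hx, h⟩⟩
        · exact hgS x hx
      simp [hg0]
    have hWS : W ⊆ S := Finset.filter_subset _ _
    obtain ⟨x₀, hx₀W, hx₀min⟩ := W.exists_min_image g hWe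
    set m := g x₀ with hmdef
    have hm0 : 0 < m := by
      have h0 : g x₀ ≠ 0 := (Finset.mem_filter.mp hx₀W).2
      exact lt_of_le_of_ne (hg x₀) (Ne.symm h0)
    have hgy0 : ∀ y, y ∉ W → g y = 0 := by
      intro y hy
      by_cases h : y ∈ S
      · by_contra hne
        exact hy (Finset.mem_filter.mpr ⟨h, hne⟩)
      · exact hgS y h
    have hmle : ∀ x ∈ W, m ≤ g x := fun x hx => hx₀min x hx
    set g' : V → ℝ := fun x => g x - if x ∈ W then m else 0 with hg'def
    have hg'0 : ∀ x, 0 ≤ g' x := by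
      intro x
      by_cases hx : x ∈ W
      · simp only [hg'def, if_pos hx]
        linarith [hmle x hx]
      · simp only [hg'def, if_neg hx]
        linarith [hg x]
    have hg'S : ∀ x ∉ S, g' x = 0 := by
      intro x hx
      have hxW : x ∉ W := fun h => hx (hWS h)
      simp [hg'def, hxW, hgS x hx]
    have hg'W : ∀ x, x ∉ W → g' x = g x := by
      intro x hx; simp [hg'def, hx]
    have hg'card : (S.filter fun x => g' x ≠ 0).card ≤ n := by
      have hsub : (S.filter fun x => g' x ≠ 0) ⊆ W.erase x₀ := by
        intro x hx
        obtain ⟨hxS, hxne⟩ := Finset.mem_filter.mp hx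
        have hxW : x ∈ W := by
          by_contra h
          exact hxne (by rw [hg'W x h]; exact hgy0 x h)
        refine Finset.mem_erase.mpr ⟨?_, hxW⟩
        intro hxx
        apply hxne
        subst hxx
        simp [hg'def, hxW, hmdef]
      have h1 := Finset.card_le_card hsub
      rw [Finset.card_erase_of_mem hx₀W] at h1
      omega
    -- splitting of sums
    have hsplit : ∀ h : V → ℝ, ∑ x ∈ S, h x * g x = ∑ x ∈ S, h x * g' x + m * ∑ x ∈ W, h x := by
      intro h
      have hpt : ∀ x ∈ S, h x * g x = h x * g' x + (if x ∈ W then m * h x else 0) := by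
        intro x _
        by_cases hx : x ∈ W
        · simp only [hg'def, if_pos hx]; ring
        · simp only [hg'def, if_neg hx]; ring
      rw [Finset.sum_congr rfl hpt, Finset.sum_add_distrib, Finset.sum_ite_mem,
        Finset.inter_eq_right.mpr hWS, Finset.mul_sum]
    have hsD : ∑ x ∈ S, (G.degree x : ℝ) * g x
        = ∑ x ∈ S, (G.degree x : ℝ) * g' x + m * ∑ x ∈ W, (G.degree x : ℝ) :=
      hsplit _
    have hsQ : ∑ x ∈ S, max (q x) 0 * g x
        = ∑ x ∈ S, max (q x) 0 * g' x + m * ∑ x ∈ W, max (q x) 0 :=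
      hsplit _
    have hsplit1 : ∑ x ∈ S, g x = ∑ x ∈ S, g' x + m * W.card := by
      have h := hsplit (fun _ => (1:ℝ))
      simpa using h
    -- difference term splitting
    have pw : ∀ x y : V, max (g x - g y) 0
        = max (g' x - g' y) 0 + m * (if x ∈ W ∧ y ∉ W then 1 else 0) := by
      intro x y
      by_cases hx : x ∈ W <;> by_cases hy : y ∈ W
      · have hcond : ¬(x ∈ W ∧ y ∉ W) := fun h => h.2 hy
        simp only [hg'def, if_pos hx, if_pos hy, if_neg hcond, mul_zero, add_zero]
        congr 1
        ring
      · have hgy : g y = 0 := hgy0 y hy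
        have hmx : m ≤ g x := hmle x hx
        have hcond : x ∈ W ∧ y ∉ W := ⟨hx, hy⟩
        simp only [hg'def, if_pos hx, if_pos hcond, if_neg hy, mul_one]
        rw [hgy, sub_zero, sub_zero, max_eq_left (by linarith), max_eq_left (by linarith)]
        ring
      · have hgx : g x = 0 := hgy0 x hx
        have hmy : m ≤ g y := hmle y hy
        have hcond : ¬(x ∈ W ∧ y ∉ W) := fun h => hx h.1
        simp only [hg'def, if_neg hx, if_pos hy, if_neg hcond, mul_zero, add_zero]
        rw [hgx, sub_zero, zero_sub, zero_sub, max_eq_right (by linarith),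
          max_eq_right (by linarith)]
      · have hgx : g x = 0 := hgy0 x hx
        have hgy : g y = 0 := hgy0 y hy
        have hcond : ¬(x ∈ W ∧ y ∉ W) := fun h => hx h.1
        simp only [hg'def, if_neg hx, if_neg hy, if_neg hcond, mul_zero, add_zero, sub_zero]
    have hdiff : ∑ x ∈ S, ∑ y ∈ G.neighborFinset x, max (g x - g y) 0
        = ∑ x ∈ S, ∑ y ∈ G.neighborFinset x, max (g' x - g' y) 0 + m * (bdryCard G W : ℝ) := by
      have h1 : ∀ x ∈ S, ∑ y ∈ G.neighborFinset x, max (g x - g y) 0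
          = ∑ y ∈ G.neighborFinset x, max (g' x - g' y) 0
            + m * (if x ∈ W then (((G.neighborFinset x).filter fun y => y ∉ W).card : ℝ)
                else 0) := by
        intro x _
        rw [Finset.sum_congr rfl (fun y _ => pw x y), Finset.sum_add_distrib]
        congr 1
        rw [← Finset.mul_sum]
        congr 1
        by_cases hx : x ∈ W
        · simp only [hx, true_and, if_true]
          exact Finset.sum_boole _ _
        · simp only [hx, false_and, if_false]
          simp
      rw [Finset.sum_congr rfl h1, Finset.sum_add_distrib]
      congr 1
      rw [← Finset.mul_sum]
      congr 1
      rw [Finset.sum_ite_mem, Finset.inter_eq_right.mpr hWS]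
      unfold bdryCard
      push_cast
      rfl
    -- the indicator inequality from sparseness
    have hInd : ∑ x ∈ W, (G.degree x : ℝ)
        ≤ k * W.card + (a+1) * (bdryCard G W : ℝ) + a * ∑ x ∈ W, max (q x) 0 := by
      have h1 := hsparse W
      have h2 := handshake_real G W
      nlinarith [h1, h2]
    have hIH := IH S g' hg'card hg'0 hg'S
    have hInd' := mul_le_mul_of_nonneg_left hInd hm0.le
    rw [hsD, hsQ, hsplit1, hdiff]
    nlinarith [hIH, hInd']

lemma qLap_nonneg (f : V → ℂ) : 0 ≤ qLap G f := by
  unfold qLap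
  apply mul_nonneg (by norm_num)
  apply tsum_nonneg
  intro x
  apply tsum_nonneg
  intro y
  by_cases h : G.Adj x y <;> simp [h] <;> positivity

lemma qPot_pos_nonneg (q : V → ℝ) (f : V → ℂ) : 0 ≤ qPot (fun x => max (q x) 0) f := by
  unfold qPot
  apply tsum_nonneg
  intro x
  have := le_max_right (q x) 0
  positivity

lemma qNormSq_nonneg (f : V → ℂ) : 0 ≤ qNormSq f := by
  unfold qNormSq
  apply tsum_nonneg
  intro x
  positivity

/-- The degree form bound for sparse graphs. -/
lemma lemC (q : V → ℝ) (a k : ℝ) (ha : 0 ≤ a) (hsparse : IsSparse G q a k)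
    (f : V → ℂ) (hf : (Function.support f).Finite) :
    qDeg G f ≤ 8*(a+1)^2 * qLap G f + 2*a * qPot (fun x => max (q x) 0) f
      + 2*k * qNormSq f := by
  classical
  set g : V → ℝ := fun x => ‖f x‖^2 with hgdef
  set S : Finset V := hf.toFinset with hSdef
  have hSf : ∀ x, f x ≠ 0 → x ∈ S := by
    intro x hx
    simp [hSdef, Set.Finite.mem_toFinset, Function.mem_support, hx]
  have hfS : ∀ x ∉ S, f x = 0 := by
    intro x hx
    by_contra h
    exact hx (hSf x h)
  set T : Finset V := S ∪ S.biUnion (fun x => G.neighborFinset x) with hTdef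
  have hST : S ⊆ T := Finset.subset_union_left
  have hfT : ∀ x ∉ T, f x = 0 := fun x hx => hfS x (fun h => hx (hST h))
  have hnbr : ∀ x ∈ S, ∀ y ∈ G.neighborFinset x, y ∈ T := by
    intro x hx y hy
    exact Finset.subset_union_right (Finset.mem_biUnion.mpr ⟨x, hx, hy⟩)
  have hgT : ∀ x ∉ T, g x = 0 := by
    intro x hx
    simp [hgdef, hfT x hx]
  have hg0 : ∀ x, 0 ≤ g x := fun x => by positivity
  -- expressing the quadratic forms as finite sums over T
  have hDeg : qDeg G f = ∑ x ∈ T, (G.degree x : ℝ) * g x := by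
    unfold qDeg
    apply tsum_eq_sum
    intro x hx
    simp [hfT x hx]
  have hNorm : qNormSq f = ∑ x ∈ T, g x := by
    unfold qNormSq
    apply tsum_eq_sum
    intro x hx
    simp [hfT x hx]
  have hPot : qPot (fun x => max (q x) 0) f = ∑ x ∈ T, max (q x) 0 * g x := by
    unfold qPot
    apply tsum_eq_sum
    intro x hx
    simp [hfT x hx]
  have hLap : qLap G f = (1/2) * ∑ x ∈ T, ∑ y ∈ G.neighborFinset x, ‖f x - f y‖^2 := by
    unfold qLap
    congr 1
    have inner : ∀ x : V, (∑' y, if G.Adj x y then ‖f x - f y‖^2 else 0)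
        = ∑ y ∈ G.neighborFinset x, ‖f x - f y‖^2 := by
      intro x
      rw [tsum_eq_sum (s := G.neighborFinset x)
        (by intro y hy; rw [if_neg (fun h => hy ((G.mem_neighborFinset x y).mpr h))])]
      exact Finset.sum_congr rfl fun y hy => if_pos ((G.mem_neighborFinset x y).mp hy)
    rw [tsum_congr inner]
    apply tsum_eq_sum
    intro x hx
    apply Finset.sum_eq_zero
    intro y hy
    have hadj : G.Adj x y := (G.mem_neighborFinset x y).mp hy
    have hfx : f x = 0 := hfT x hx
    have hfy : f y = 0 := by
      by_contra h
      exact hx (hnbr y (hSf y h) x ((G.mem_neighborFinset y x).mpr hadj.symm))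
    simp [hfx, hfy]
  -- the coarea estimate over T
  have hA := lemA G q a k hsparse ((T.filter fun x => g x ≠ 0).card) T g le_rfl hg0 hgT
  -- pointwise bound for the difference term
  have ptw : ∀ x y : V, (a+1) * max (g x - g y) 0
      ≤ (1/8) * (‖f x‖ + ‖f y‖)^2 + 2*(a+1)^2 * ‖f x - f y‖^2 := by
    intro x y
    have h1 : |‖f x‖ - ‖f y‖| ≤ ‖f x - f y‖ := abs_norm_sub_norm_le _ _
    have hu : 0 ≤ ‖f x‖ + ‖f y‖ := by positivity
    have hw : (0:ℝ) ≤ ‖f x - f y‖ := norm_nonneg _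
    have h2 : max (g x - g y) 0 ≤ ‖f x - f y‖ * (‖f x‖ + ‖f y‖) := by
      apply max_le _ (by positivity)
      have he : g x - g y = (‖f x‖ - ‖f y‖) * (‖f x‖ + ‖f y‖) := by
        simp only [hgdef]; ring
      rw [he]
      calc (‖f x‖ - ‖f y‖) * (‖f x‖ + ‖f y‖)
          ≤ |‖f x‖ - ‖f y‖| * (‖f x‖ + ‖f y‖) :=
            mul_le_mul_of_nonneg_right (le_abs_self _) hu
        _ ≤ ‖f x - f y‖ * (‖f x‖ + ‖f y‖) := mul_le_mul_of_nonneg_right h1 hu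
    have h3 : (a+1) * max (g x - g y) 0 ≤ (a+1) * (‖f x - f y‖ * (‖f x‖ + ‖f y‖)) :=
      mul_le_mul_of_nonneg_left h2 (by linarith)
    nlinarith [sq_nonneg ((‖f x‖ + ‖f y‖) - 4*(a+1)*‖f x - f y‖)]
  -- bounding the neighbor-sum of g y
  have hswap : ∑ x ∈ T, ∑ y ∈ G.neighborFinset x, g y ≤ ∑ x ∈ T, (G.degree x : ℝ) * g x := by
    have step1 : ∀ x ∈ T, ∑ y ∈ G.neighborFinset x, g y
        = ∑ y ∈ T, if G.Adj x y then g y else 0 := by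
      intro x _
      rw [← Finset.sum_filter]
      refine (Finset.sum_subset ?_ ?_).symm
      · intro y hy
        exact (G.mem_neighborFinset x y).mpr (Finset.mem_filter.mp hy).2
      · intro y hy hyn
        by_cases hyT : y ∈ T
        · exact absurd (Finset.mem_filter.mpr ⟨hyT, (G.mem_neighborFinset x y).mp hy⟩) hyn
        · exact hgT y hyT
    rw [Finset.sum_congr rfl step1, Finset.sum_comm]
    apply Finset.sum_le_sum
    intro y _
    rw [← Finset.sum_filter, Finset.sum_const, nsmul_eq_mul]
    have hsub : (T.filter fun x => G.Adj x y) ⊆ G.neighborFinset y := by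
      intro x hx
      exact (G.mem_neighborFinset y x).mpr ((Finset.mem_filter.mp hx).2).symm
    have hcard : (((T.filter fun x => G.Adj x y)).card : ℝ) ≤ (G.degree y : ℝ) := by
      exact_mod_cast (Finset.card_le_card hsub).trans_eq (G.card_neighborFinset_eq_degree y)
    exact mul_le_mul_of_nonneg_right hcard (hg0 y)
  -- Σ₁ bound
  have hSig1 : ∑ x ∈ T, ∑ y ∈ G.neighborFinset x, (‖f x‖ + ‖f y‖)^2
      ≤ 4 * ∑ x ∈ T, (G.degree x : ℝ) * g x := by
    have step : ∑ x ∈ T, ∑ y ∈ G.neighborFinset x, (‖f x‖ + ‖f y‖)^2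
        ≤ ∑ x ∈ T, ∑ y ∈ G.neighborFinset x, (2 * g x + 2 * g y) := by
      refine Finset.sum_le_sum fun x _ => Finset.sum_le_sum fun y _ => ?_
      simp only [hgdef]
      nlinarith [sq_nonneg (‖f x‖ - ‖f y‖)]
    have step2 : ∑ x ∈ T, ∑ y ∈ G.neighborFinset x, (2 * g x + 2 * g y)
        = 2 * ∑ x ∈ T, (G.degree x : ℝ) * g x
          + 2 * ∑ x ∈ T, ∑ y ∈ G.neighborFinset x, g y := by
      rw [Finset.mul_sum, Finset.mul_sum, ← Finset.sum_add_distrib]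
      refine Finset.sum_congr rfl fun x _ => ?_
      have hconst : ∑ y ∈ G.neighborFinset x, (2:ℝ) * g x
          = 2 * ((G.degree x : ℝ) * g x) := by
        rw [Finset.sum_const, nsmul_eq_mul, G.card_neighborFinset_eq_degree]
        ring
      rw [Finset.sum_add_distrib, hconst, Finset.mul_sum]
    linarith [step, step2, hswap]
  -- the difference bound
  have hDbound : (a+1) * ∑ x ∈ T, ∑ y ∈ G.neighborFinset x, max (g x - g y) 0
      ≤ (1/2) * ∑ x ∈ T, (G.degree x : ℝ) * g x + 4*(a+1)^2 * qLap G f := by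
    have h1 : (a+1) * ∑ x ∈ T, ∑ y ∈ G.neighborFinset x, max (g x - g y) 0
        = ∑ x ∈ T, ∑ y ∈ G.neighborFinset x, (a+1) * max (g x - g y) 0 := by
      rw [Finset.mul_sum]
      exact Finset.sum_congr rfl fun x _ => Finset.mul_sum _ _ _
    have h2 : ∑ x ∈ T, ∑ y ∈ G.neighborFinset x, (a+1) * max (g x - g y) 0
        ≤ ∑ x ∈ T, ∑ y ∈ G.neighborFinset x,
            ((1/8) * (‖f x‖ + ‖f y‖)^2 + 2*(a+1)^2 * ‖f x - f y‖^2) :=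
      Finset.sum_le_sum fun x _ => Finset.sum_le_sum fun y _ => ptw x y
    have h3 : ∑ x ∈ T, ∑ y ∈ G.neighborFinset x,
          ((1/8) * (‖f x‖ + ‖f y‖)^2 + 2*(a+1)^2 * ‖f x - f y‖^2)
        = (1/8) * (∑ x ∈ T, ∑ y ∈ G.neighborFinset x, (‖f x‖ + ‖f y‖)^2)
          + 2*(a+1)^2 * (∑ x ∈ T, ∑ y ∈ G.neighborFinset x, ‖f x - f y‖^2) := by
      rw [Finset.mul_sum, Finset.mul_sum, ← Finset.sum_add_distrib]
      refine Finset.sum_congr rfl fun x _ => ?_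
      rw [Finset.mul_sum, Finset.mul_sum, ← Finset.sum_add_distrib]
    have h4 : ∑ x ∈ T, ∑ y ∈ G.neighborFinset x, ‖f x - f y‖^2 = 2 * qLap G f := by
      rw [hLap]; ring
    have h5 : (0:ℝ) ≤ (a+1)^2 := sq_nonneg _
    rw [h1]
    calc ∑ x ∈ T, ∑ y ∈ G.neighborFinset x, (a+1) * max (g x - g y) 0
        ≤ (1/8) * (∑ x ∈ T, ∑ y ∈ G.neighborFinset x, (‖f x‖ + ‖f y‖)^2)
          + 2*(a+1)^2 * (∑ x ∈ T, ∑ y ∈ G.neighborFinset x, ‖f x - f y‖^2) := by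
          rw [← h3]; exact h2
      _ ≤ (1/2) * ∑ x ∈ T, (G.degree x : ℝ) * g x + 4*(a+1)^2 * qLap G f := by
          rw [h4]
          nlinarith [hSig1, h5]
  rw [hDeg, hNorm, hPot]
  linarith [hA, hDbound]

lemma support_delta (x₀ : V) :
    (Function.support (fun y => if y = x₀ then (1:ℂ) else 0)).Finite := by
  apply Set.Finite.subset (Set.finite_singleton x₀)
  intro y hy
  simp only [Function.mem_support, ne_eq] at hy
  rw [Set.mem_singleton_iff]
  by_contra h
  simp [h] at hy

lemma qNormSq_delta (x₀ : V) : qNormSq (fun y => if y = x₀ then (1:ℂ) else 0) = 1 := by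
  unfold qNormSq
  rw [tsum_eq_single x₀ (by intro b hb; simp [hb])]
  simp

lemma qPot_delta (p : V → ℝ) (x₀ : V) :
    qPot p (fun y => if y = x₀ then (1:ℂ) else 0) = p x₀ := by
  unfold qPot
  rw [tsum_eq_single x₀ (by intro b hb; simp [hb])]
  simp

lemma qLap_delta (x₀ : V) :
    qLap G (fun y => if y = x₀ then (1:ℂ) else 0) = (G.degree x₀ : ℝ) := by
  classical
  unfold qLap
  set f : V → ℂ := fun y => if y = x₀ then (1:ℂ) else 0 with hfdef
  have inner : ∀ x : V, (∑' y, if G.Adj x y then ‖f x - f y‖^2 else 0)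
      = if x = x₀ then (G.degree x₀ : ℝ) else (if G.Adj x x₀ then 1 else 0) := by
    intro x
    by_cases hx : x = x₀
    · rw [if_pos hx, hx]
      rw [tsum_eq_sum (s := G.neighborFinset x₀)
        (by intro y hy; rw [if_neg (fun h => hy ((G.mem_neighborFinset x₀ y).mpr h))])]
      have hterm : ∀ y ∈ G.neighborFinset x₀,
          (if G.Adj x₀ y then ‖f x₀ - f y‖^2 else 0) = 1 := by
        intro y hy
        have hadj : G.Adj x₀ y := (G.mem_neighborFinset x₀ y).mp hy
        have hne : y ≠ x₀ := hadj.ne'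
        rw [if_pos hadj]
        simp [hfdef, hne]
      rw [Finset.sum_congr rfl hterm, Finset.sum_const, nsmul_eq_mul, mul_one,
        G.card_neighborFinset_eq_degree]
    · rw [if_neg hx, tsum_eq_single x₀ ?_]
      · by_cases hadj : G.Adj x x₀
        · rw [if_pos hadj, if_pos hadj]
          simp [hfdef, hx]
        · rw [if_neg hadj, if_neg hadj]
      · intro b hb
        by_cases hadj : G.Adj x b
        · rw [if_pos hadj]
          simp [hfdef, hx, hb]
        · rw [if_neg hadj]
  rw [tsum_congr inner]
  rw [tsum_eq_sum (s := insert x₀ (G.neighborFinset x₀)) ?_]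
  · rw [Finset.sum_insert (G.notMem_neighborFinset_self x₀), if_pos rfl]
    have hterm : ∀ x ∈ G.neighborFinset x₀,
        (if x = x₀ then (G.degree x₀ : ℝ) else if G.Adj x x₀ then 1 else 0) = 1 := by
      intro x hxmem
      have hadj : G.Adj x₀ x := (G.mem_neighborFinset x₀ x).mp hxmem
      rw [if_neg hadj.ne', if_pos hadj.symm]
    rw [Finset.sum_congr rfl hterm, Finset.sum_const, nsmul_eq_mul, mul_one,
      G.card_neighborFinset_eq_degree]
    ring
  · intro x hxs
    have hx : x ≠ x₀ := fun h => hxs (by rw [h]; exact Finset.mem_insert_self _ _)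
    have hadj : ¬ G.Adj x x₀ := fun h =>
      hxs (Finset.mem_insert_of_mem ((G.mem_neighborFinset x₀ x).mpr h.symm))
    rw [if_neg hx, if_neg hadj]

end Stmt8Aux

/-- for an `(a,k)`-sparse pair `(G,q)`, the potential `q` belongs to `K_{0⁺}`
iff for every `α ∈ (0,1)` there is `κ_α ≥ 0` with
`q₋(x) ≤ α(deg(x) + q₊(x)) + κ_α` for all `x ∈ V`. -/
theorem stmt8 [Countable V] (q : V → ℝ) (a k : ℝ) (ha : 0 ≤ a) (hk : 0 ≤ k)
    (hsparse : IsSparse G q a k) :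
    (∀ α : ℝ, 0 < α → α < 1 → KClass G q α) ↔
    (∀ α : ℝ, 0 < α → α < 1 → ∃ κ : ℝ, 0 ≤ κ ∧
      ∀ x : V, max (-q x) 0 ≤ α * ((G.degree x : ℝ) + max (q x) 0) + κ) := by
  constructor
  · intro h α hα0 hα1
    obtain ⟨C, hC0, hC⟩ := h α hα0 hα1
    refine ⟨C, hC0, fun x => ?_⟩
    have hd := hC (fun y => if y = x then (1:ℂ) else 0) (support_delta x)
    rw [qPot_delta, qPot_delta, qLap_delta, qNormSq_delta] at hd
    linarith
  · intro h α hα0 hα1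
    set A : ℝ := 8*(a+1)^2 with hAdef
    have hA0 : 0 < A + 1 := by positivity
    set β : ℝ := α / (A + 1) with hβdef
    have hβ0 : 0 < β := div_pos hα0 hA0
    have hβA : β * (A + 1) = α := div_mul_cancel₀ α (ne_of_gt hA0)
    have hβ1 : β < 1 := by
      have h1 : (1:ℝ) ≤ A + 1 := by nlinarith
      have h2 : β ≤ α := by
        rw [hβdef]
        exact div_le_self hα0.le h1
      linarith
    obtain ⟨κ, hκ0, hκ⟩ := h β hβ0 hβ1
    have hCnn : (0:ℝ) ≤ β * (2*k) + κ := by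
      have := mul_nonneg hβ0.le (by linarith : (0:ℝ) ≤ 2*k)
      linarith
    refine ⟨β * (2*k) + κ, hCnn, ?_⟩
    intro f hf
    classical
    set S : Finset V := hf.toFinset with hSdef
    have hfS : ∀ x ∉ S, f x = 0 := by
      intro x hx
      by_contra hc
      exact hx (by simp [hSdef, Set.Finite.mem_toFinset, Function.mem_support, hc])
    have hNeg : qPot (fun x => max (-q x) 0) f = ∑ x ∈ S, max (-q x) 0 * ‖f x‖^2 :=
      tsum_eq_sum (by intro x hx; simp [hfS x hx])
    have hPos : qPot (fun x => max (q x) 0) f = ∑ x ∈ S, max (q x) 0 * ‖f x‖^2 :=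
      tsum_eq_sum (by intro x hx; simp [hfS x hx])
    have hNrm : qNormSq f = ∑ x ∈ S, ‖f x‖^2 :=
      tsum_eq_sum (by intro x hx; simp [hfS x hx])
    have hDg : qDeg G f = ∑ x ∈ S, (G.degree x : ℝ) * ‖f x‖^2 :=
      tsum_eq_sum (by intro x hx; simp [hfS x hx])
    have hstep : qPot (fun x => max (-q x) 0) f
        ≤ β * qDeg G f + β * qPot (fun x => max (q x) 0) f + κ * qNormSq f := by
      rw [hNeg, hPos, hNrm, hDg, Finset.mul_sum, Finset.mul_sum, Finset.mul_sum,
        ← Finset.sum_add_distrib, ← Finset.sum_add_distrib]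
      apply Finset.sum_le_sum
      intro x _
      have h1 := hκ x
      have h2 : (0:ℝ) ≤ ‖f x‖^2 := by positivity
      nlinarith [mul_le_mul_of_nonneg_right h1 h2]
    have hCform := lemC G q a k ha hsparse f hf
    have hL := qLap_nonneg G f
    have hQ := qPot_pos_nonneg q f
    have hN := qNormSq_nonneg f
    have hA2a : (0:ℝ) ≤ A - 2*a := by nlinarith
    nlinarith [mul_le_mul_of_nonneg_left hCform hβ0.le, mul_nonneg hβ0.le hL,
      mul_nonneg hβ0.le hQ, mul_nonneg hβ0.le hN,
      mul_nonneg (mul_nonneg hβ0.le hA2a) hQ, mul_nonneg (mul_nonneg hβ0.le hA2a) hL]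


end
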